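/- arXiv:1709.04431 — 2 statements merged into one kernel-verified Lean document; each statement's English description precedes it below -/
import Mathlib

section
/- Let X be a finite pure n-dimensional weighted simplicial complex. For every 0 ≤ k ≤ n and every φ, ψ ∈ C^k(X,ℝ): (1) (k+1)! ⟨φ, ψ⟩ = Σ_{τ ∈ Σ(k−1)} ⟨φ_τ, ψ_τ⟩, and (2) k! ⟨δφ, δψ⟩ = Σ_{τ ∈ Σ(k−1)} ⟨δ_τ φ_τ, δ_τ ψ_τ⟩, where the inner products on the right-hand sides are taken in the links X_τ. -/
open Finset

variable {V : Type} [Fintype V] [DecidableEq V]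

/-- A finite abstract simplicial complex on the vertex type `V`. -/
structure SComplex (V : Type) [Fintype V] [DecidableEq V] where
  faces : Finset (Finset V)
  empty_mem : ∅ ∈ faces
  down_closed : ∀ s ∈ faces, ∀ t, t ⊆ s → t ∈ faces

namespace SComplex

/-- `X` is pure `n`-dimensional: every face is contained in an `n`-dimensional face. -/
def Pure (X : SComplex V) (n : ℕ) : Prop :=
  (∀ s ∈ X.faces, s.card ≤ n + 1) ∧
    ∀ s ∈ X.faces, ∃ t ∈ X.faces, s ⊆ t ∧ t.card = n + 1

/-- `σ` is an ordered simplex with `j` vertices (an element of `Σ(j-1)`). -/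
def IsOSimp (X : SComplex V) {j : ℕ} (σ : Fin j → V) : Prop :=
  Function.Injective σ ∧ Finset.image σ Finset.univ ∈ X.faces

instance {j : ℕ} (X : SComplex V) (σ : Fin j → V) : Decidable (X.IsOSimp σ) := by
  unfold IsOSimp; infer_instance

/-- A balanced, strictly positive weight function on the simplices of `X`. -/
def IsBalanced (X : SComplex V) (n : ℕ) (m : Finset V → ℝ) : Prop :=
  (∀ s ∈ X.faces, 0 < m s) ∧
    ∀ s ∈ X.faces, s.card ≤ n →
      m s = ∑ t ∈ X.faces.filter fun t => s ⊆ t ∧ t.card = s.card + 1, m t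

/-- The weight of an ordered tuple (zero off the ordered simplices). -/
noncomputable def wt (X : SComplex V) (m : Finset V → ℝ) {j : ℕ} (σ : Fin j → V) : ℝ :=
  if X.IsOSimp σ then m (Finset.image σ Finset.univ) else 0

/-- `φ` is a `j`-vertex form, i.e. an element of `C^{j-1}(X,ℝ)`:
antisymmetric and supported on the ordered simplices. -/
def IsForm (X : SComplex V) (j : ℕ) (φ : (Fin j → V) → ℝ) : Prop :=
  (∀ (σ : Fin j → V) (π : Equiv.Perm (Fin j)),
      φ (σ ∘ π) = ((Equiv.Perm.sign π : ℤ) : ℝ) * φ σ) ∧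
    ∀ σ : Fin j → V, ¬X.IsOSimp σ → φ σ = 0

/-- The inner product on `j`-vertex forms (`C^{j-1}(X,ℝ)`). -/
noncomputable def innerF (X : SComplex V) (m : Finset V → ℝ) (j : ℕ)
    (φ ψ : (Fin j → V) → ℝ) : ℝ :=
  ∑ σ : Fin j → V, X.wt m σ / (Nat.factorial j : ℝ) * (φ σ * ψ σ)

/-- The sum of a quantity over all ordered simplices with `j` vertices. -/
noncomputable def sumOSimp (X : SComplex V) (j : ℕ) (F : (Fin j → V) → ℝ) : ℝ :=
  ∑ σ : Fin j → V, if X.IsOSimp σ then F σ else 0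

/-- The simplicial differential `d`. -/
def dOp {j : ℕ} (φ : (Fin j → V) → ℝ) : (Fin (j + 1) → V) → ℝ :=
  fun σ => ∑ i : Fin (j + 1), (-1 : ℝ) ^ (i : ℕ) * φ (σ ∘ i.succAbove)

/-- The codifferential `δ` (the adjoint of `d`). -/
noncomputable def deltaOp (X : SComplex V) (m : Finset V → ℝ) {j : ℕ}
    (φ : (Fin (j + 1) → V) → ℝ) : (Fin j → V) → ℝ :=
  fun τ => ∑ v : V, X.wt m (Fin.cons v τ) / X.wt m τ * φ (Fin.cons v τ)

/-- The upper Laplacian `Δ⁺` on `j`-vertex forms (`C^{j-1}`). -/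
noncomputable def lapPlus (X : SComplex V) (m : Finset V → ℝ) (j : ℕ)
    (φ : (Fin j → V) → ℝ) : (Fin j → V) → ℝ :=
  X.deltaOp m (dOp φ)

/-- The lower Laplacian `Δ⁻` on `(j+1)`-vertex forms (`C^j`). -/
noncomputable def lapMinus (X : SComplex V) (m : Finset V → ℝ) (j : ℕ)
    (φ : (Fin (j + 1) → V) → ℝ) : (Fin (j + 1) → V) → ℝ :=
  dOp (X.deltaOp m φ)

/-- The set of eigenvalues of `Δ⁺` on `j`-vertex forms. -/
def specLapPlus (X : SComplex V) (m : Finset V → ℝ) (j : ℕ) : Set ℝ :=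
  {μ | ∃ φ : (Fin j → V) → ℝ, X.IsForm j φ ∧ φ ≠ 0 ∧ X.lapPlus m j φ = μ • φ}

/-- The set of eigenvalues of `Δ⁻` on `(j+1)`-vertex forms (`C^j`). -/
def specLapMinus (X : SComplex V) (m : Finset V → ℝ) (j : ℕ) : Set ℝ :=
  {μ | ∃ φ : (Fin (j + 1) → V) → ℝ, X.IsForm (j + 1) φ ∧ φ ≠ 0 ∧ X.lapMinus m j φ = μ • φ}

/-- The link of a face `s`. -/
def link (X : SComplex V) (s : Finset V) : SComplex V where
  faces := insert ∅ (X.faces.filter fun t => Disjoint s t ∧ s ∪ t ∈ X.faces)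
  empty_mem := Finset.mem_insert_self _ _
  down_closed := by
    intro a ha t hts
    rcases Finset.mem_insert.mp ha with h | h
    · refine Finset.mem_insert.mpr (Or.inl ?_)
      subst h; exact Finset.subset_empty.mp hts
    · rw [Finset.mem_filter] at h
      refine Finset.mem_insert.mpr (Or.inr (Finset.mem_filter.mpr
        ⟨X.down_closed a h.1 t hts, Disjoint.mono_right hts h.2.1,
          X.down_closed _ h.2.2 _ (Finset.union_subset_union (Finset.Subset.refl s) hts)⟩))

/-- The induced (balanced) weight on the link of `s`. -/
def linkWt (m : Finset V → ℝ) (s : Finset V) : Finset V → ℝ := fun t => m (s ∪ t)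

/-- The graph given by the 1-skeleton of `X`. -/
def skeleton (X : SComplex V) : SimpleGraph V where
  Adj u v := u ≠ v ∧ ({u, v} : Finset V) ∈ X.faces
  symm := by
    refine ⟨fun u v h => ?_⟩
    exact ⟨h.1.symm, by rw [Finset.pair_comm]; exact h.2⟩
  loopless := ⟨fun u h => h.1 rfl⟩

/-- The 1-skeleton of `X` is connected (on the vertices of `X`). -/
def SkelConnected (X : SComplex V) : Prop :=
  ∀ u v : V, ({u} : Finset V) ∈ X.faces → ({v} : Finset V) ∈ X.faces →
    X.skeleton.Reachable u v

/-- The 1-skeleton of `X` and the 1-skeletons of all links of `X` of dimension `> 0`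
are connected. -/
def AllLinksConnected (X : SComplex V) (n : ℕ) : Prop :=
  X.SkelConnected ∧ ∀ s ∈ X.faces, s.card < n → (X.link s).SkelConnected

/-- The localization `φ_τ ∈ C⁰(X_τ)` of a `(k+1)`-vertex form `φ` at an ordered
`k`-vertex simplex `τ`. -/
def localize {k : ℕ} (φ : (Fin (k + 1) → V) → ℝ) (τ : Fin k → V) : (Fin 1 → V) → ℝ :=
  fun σ => φ (Fin.append τ σ)

/-- The restriction of a cochain to the subcomplex `Y` (truncating off `Y`). -/
def restrict (Y : SComplex V) {j : ℕ} (φ : (Fin j → V) → ℝ) : (Fin j → V) → ℝ :=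
  fun σ => if Y.IsOSimp σ then φ σ else 0

/-- `S` is an `(n+1)`-partition of `X`: the vertices of `X` are partitioned into the
sides `S i`, and every edge joins two distinct sides. -/
def IsPartition (X : SComplex V) (n : ℕ) (S : Fin (n + 1) → Finset V) : Prop :=
  (∀ i, ∀ v ∈ S i, ({v} : Finset V) ∈ X.faces) ∧
    (∀ v : V, ({v} : Finset V) ∈ X.faces → ∃! i, v ∈ S i) ∧
    ∀ u v : V, u ≠ v → ({u, v} : Finset V) ∈ X.faces → ∀ i, u ∈ S i → v ∉ S i

/-- The side differential `d_{(k,j)}` with respect to the side `S`. -/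
def dSide (S : Finset V) {j : ℕ} (φ : (Fin j → V) → ℝ) : (Fin (j + 1) → V) → ℝ :=
  fun σ => ∑ i : Fin (j + 1),
    if σ i ∈ S then (-1 : ℝ) ^ (i : ℕ) * φ (σ ∘ i.succAbove) else 0

/-- The adjoint `δ_{(k,j)}` of the side differential. -/
noncomputable def deltaSide (X : SComplex V) (m : Finset V → ℝ) (S : Finset V) {j : ℕ}
    (φ : (Fin (j + 1) → V) → ℝ) : (Fin j → V) → ℝ :=
  fun τ => ∑ v ∈ S, X.wt m (Fin.cons v τ) / X.wt m τ * φ (Fin.cons v τ)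

/-- The side lower Laplacian `Δ⁻_{(k,j)}` on `(j+1)`-vertex forms (`C^j`). -/
noncomputable def lapMinusSide (X : SComplex V) (m : Finset V → ℝ) (S : Finset V) (j : ℕ)
    (φ : (Fin (j + 1) → V) → ℝ) : (Fin (j + 1) → V) → ℝ :=
  dSide S (X.deltaSide m S φ)

end SComplex

open SComplex

section LocalizationHelpers

variable {V : Type} [Fintype V] [DecidableEq V]

private lemma image_cons_univ {k : ℕ} (v : V) (τ : Fin k → V) :
    Finset.image (Fin.cons v τ) Finset.univ = insert v (Finset.image τ Finset.univ) := by
  apply Finset.coe_injective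
  simp [Set.image_univ, Fin.range_cons]

private lemma osimp_of_cons {X : SComplex V} {k : ℕ} {v : V} {τ : Fin k → V}
    (h : X.IsOSimp (Fin.cons v τ)) : X.IsOSimp τ := by
  obtain ⟨hinj, hf⟩ := h
  refine ⟨(Fin.cons_injective_iff.mp hinj).2, X.down_closed _ hf _ ?_⟩
  rw [image_cons_univ]
  exact Finset.subset_insert _ _

private lemma osimp_cons_iff {X : SComplex V} {k : ℕ} {τ : Fin k → V}
    (hτ : X.IsOSimp τ) (v : V) :
    X.IsOSimp (Fin.cons v τ) ↔
      v ∉ Finset.image τ Finset.univ ∧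
        insert v (Finset.image τ Finset.univ) ∈ X.faces := by
  have hmem : v ∈ Finset.image τ Finset.univ ↔ v ∈ Set.range τ := by
    simp [Set.mem_range, eq_comm]
  unfold SComplex.IsOSimp
  rw [Fin.cons_injective_iff, image_cons_univ]
  constructor
  · rintro ⟨⟨hv, -⟩, hf⟩
    exact ⟨fun h => hv (hmem.mp h), hf⟩
  · rintro ⟨hv, hf⟩
    exact ⟨⟨fun h => hv (hmem.mpr h), hτ.1⟩, hf⟩

private lemma link_osimp_single (X : SComplex V) {s : Finset V} (v : V) :
    (X.link s).IsOSimp (fun _ : Fin 1 => v) ↔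
      v ∉ s ∧ insert v s ∈ X.faces := by
  have himg : Finset.image (fun _ : Fin 1 => v) Finset.univ = {v} :=
    Finset.image_const Finset.univ_nonempty v
  have hins : s ∪ {v} = insert v s := by
    rw [Finset.union_comm, ← Finset.insert_eq]
  constructor
  · rintro ⟨-, hf⟩
    rw [himg, SComplex.link] at hf
    rcases Finset.mem_insert.mp hf with h | h
    · exact absurd h (Finset.singleton_ne_empty v)
    · rcases Finset.mem_filter.mp h with ⟨-, hdisj, hun⟩
      rw [hins] at hun
      exact ⟨Finset.disjoint_singleton_right.mp hdisj, hun⟩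
  · rintro ⟨hv, hf⟩
    refine ⟨Function.injective_of_subsingleton _, ?_⟩
    rw [himg, SComplex.link]
    refine Finset.mem_insert.mpr (Or.inr (Finset.mem_filter.mpr
      ⟨X.down_closed _ hf _ ?_, Finset.disjoint_singleton_right.mpr hv, by rw [hins]; exact hf⟩))
    intro x hx
    rw [Finset.mem_singleton] at hx
    subst hx
    exact Finset.mem_insert_self _ _

private lemma wt_cons {X : SComplex V} (m : Finset V → ℝ) {k : ℕ} {τ : Fin k → V}
    (hτ : X.IsOSimp τ) (v : V) :
    X.wt m (Fin.cons v τ) =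
      (X.link (Finset.image τ Finset.univ)).wt
        (linkWt m (Finset.image τ Finset.univ)) (fun _ : Fin 1 => v) := by
  set s := Finset.image τ Finset.univ with hs
  have h1 : X.IsOSimp (Fin.cons v τ) ↔ (X.link s).IsOSimp (fun _ : Fin 1 => v) := by
    rw [osimp_cons_iff hτ, link_osimp_single]
  have himg : Finset.image (fun _ : Fin 1 => v) Finset.univ = {v} :=
    Finset.image_const Finset.univ_nonempty v
  unfold SComplex.wt
  by_cases h : X.IsOSimp (Fin.cons v τ)
  · rw [if_pos h, if_pos (h1.mp h), image_cons_univ, himg]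
    unfold SComplex.linkWt
    congr 1
    rw [Finset.union_comm, ← Finset.insert_eq]
  · rw [if_neg h, if_neg (fun hh => h (h1.mpr hh))]

private lemma wt_of_osimp {X : SComplex V} (m : Finset V → ℝ) {j : ℕ} {τ : Fin j → V}
    (hτ : X.IsOSimp τ) : X.wt m τ = m (Finset.image τ Finset.univ) := if_pos hτ

private lemma wt_cons_zero {X : SComplex V} (m : Finset V → ℝ) {k : ℕ} {τ : Fin k → V}
    (hτ : ¬X.IsOSimp τ) (v : V) : X.wt m (Fin.cons v τ) = 0 := by
  rw [SComplex.wt, if_neg (fun h => hτ (osimp_of_cons h))]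

private lemma link_wt_nil (X : SComplex V) (m : Finset V → ℝ) (s : Finset V)
    (σ : Fin 0 → V) : (X.link s).wt (linkWt m s) σ = m s := by
  have himg : Finset.image σ Finset.univ = ∅ := by simp
  rw [SComplex.wt, if_pos ⟨Function.injective_of_subsingleton _, by
    rw [himg]; exact (X.link s).empty_mem⟩, himg]
  unfold SComplex.linkWt
  rw [Finset.union_empty]

private lemma form_snoc {X : SComplex V} {k : ℕ} {φ : (Fin (k + 1) → V) → ℝ}
    (hφ : X.IsForm (k + 1) φ) (τ : Fin k → V) (v : V) :
    φ (Fin.snoc τ v) = (-1 : ℝ) ^ k * φ (Fin.cons v τ) := by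
  have h := hφ.1 (Fin.cons v τ) (finRotate (k + 1))
  have he : Fin.cons v τ ∘ (finRotate (k + 1)) = Fin.snoc τ v := by
    rw [Fin.snoc_eq_cons_rotate]
    rfl
  rw [← he, h, sign_finRotate]
  norm_num

private lemma fac_cancel {c : ℝ} (hc : c ≠ 0) (a b : ℝ) : c * (a / c * b) = a * b := by
  field_simp

/-- Lemma 3.3: localization of the inner product and of the codifferential:
`(k+1)!⟨φ,ψ⟩ = ∑_{τ∈Σ(k-1)} ⟨φ_τ,ψ_τ⟩` and `k!⟨δφ,δψ⟩ = ∑_{τ∈Σ(k-1)} ⟨δ_τφ_τ,δ_τψ_τ⟩`. -/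
theorem localization_of_inner_products
    (X : SComplex V) (n : ℕ) (m : Finset V → ℝ)
    (hpure : X.Pure n) (hm : X.IsBalanced n m)
    (k : ℕ) (hk : k ≤ n)
    (φ ψ : (Fin (k + 1) → V) → ℝ) (hφ : X.IsForm (k + 1) φ) (hψ : X.IsForm (k + 1) ψ) :
    ((Nat.factorial (k + 1) : ℝ) * X.innerF m (k + 1) φ ψ =
      X.sumOSimp k fun τ =>
        (X.link (Finset.image τ Finset.univ)).innerF
          (linkWt m (Finset.image τ Finset.univ)) 1 (localize φ τ) (localize ψ τ)) ∧
    (Nat.factorial k : ℝ) * X.innerF m k (X.deltaOp m φ) (X.deltaOp m ψ) =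
      X.sumOSimp k fun τ =>
        (X.link (Finset.image τ Finset.univ)).innerF
          (linkWt m (Finset.image τ Finset.univ)) 0
          ((X.link (Finset.image τ Finset.univ)).deltaOp
            (linkWt m (Finset.image τ Finset.univ)) (localize φ τ))
          ((X.link (Finset.image τ Finset.univ)).deltaOp
            (linkWt m (Finset.image τ Finset.univ)) (localize ψ τ)) := by
  classical
  have hfac1 : ((Nat.factorial (k + 1) : ℕ) : ℝ) ≠ 0 :=
    Nat.cast_ne_zero.mpr (Nat.factorial_ne_zero _)
  have hfack : ((Nat.factorial k : ℕ) : ℝ) ≠ 0 :=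
    Nat.cast_ne_zero.mpr (Nat.factorial_ne_zero _)
  have hprod : ∀ (τ : Fin k → V) (v : V),
      φ (Fin.snoc τ v) * ψ (Fin.snoc τ v) = φ (Fin.cons v τ) * ψ (Fin.cons v τ) := by
    intro τ v
    rw [form_snoc hφ, form_snoc hψ, mul_mul_mul_comm, ← mul_pow, neg_mul_neg, one_mul,
      one_pow, one_mul]
  constructor
  · have key : ∀ τ : Fin k → V,
        (if X.IsOSimp τ then
          (X.link (Finset.image τ Finset.univ)).innerF
            (linkWt m (Finset.image τ Finset.univ)) 1 (localize φ τ) (localize ψ τ)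
        else 0)
        = ∑ v : V, X.wt m (Fin.cons v τ) * (φ (Fin.cons v τ) * ψ (Fin.cons v τ)) := by
      intro τ
      by_cases hτ : X.IsOSimp τ
      · rw [if_pos hτ]
        unfold SComplex.innerF SComplex.localize
        refine (Fintype.sum_equiv (Equiv.funUnique (Fin 1) V).symm _ _ (fun v => ?_)).symm
        show X.wt m (Fin.cons v τ) * (φ (Fin.cons v τ) * ψ (Fin.cons v τ))
            = (X.link (Finset.image τ Finset.univ)).wt
              (linkWt m (Finset.image τ Finset.univ)) (fun _ : Fin 1 => v) /
              ((Nat.factorial 1 : ℕ) : ℝ) *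
              (φ (Fin.append τ (fun _ : Fin 1 => v)) * ψ (Fin.append τ (fun _ : Fin 1 => v)))
        rw [Fin.append_right_eq_snoc]
        show _ = _ * (φ (Fin.snoc τ v) * ψ (Fin.snoc τ v))
        rw [hprod, ← wt_cons m hτ v, Nat.factorial_one, Nat.cast_one, div_one]
      · rw [if_neg hτ]
        exact (Finset.sum_eq_zero fun v _ => by rw [wt_cons_zero m hτ v, zero_mul]).symm
    unfold SComplex.sumOSimp
    calc ((Nat.factorial (k + 1) : ℕ) : ℝ) * X.innerF m (k + 1) φ ψ
        = ∑ σ : Fin (k + 1) → V, X.wt m σ * (φ σ * ψ σ) := by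
          unfold SComplex.innerF
          rw [Finset.mul_sum]
          exact Finset.sum_congr rfl fun σ _ => fac_cancel hfac1 _ _
      _ = ∑ p : V × (Fin k → V),
            X.wt m (Fin.cons p.1 p.2) * (φ (Fin.cons p.1 p.2) * ψ (Fin.cons p.1 p.2)) :=
          (Fintype.sum_equiv (Fin.consEquiv fun _ => V) _ _ fun p => rfl).symm
      _ = ∑ τ : Fin k → V, ∑ v : V,
            X.wt m (Fin.cons v τ) * (φ (Fin.cons v τ) * ψ (Fin.cons v τ)) := by
          rw [Fintype.sum_prod_type]
          exact Finset.sum_comm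
      _ = _ := Finset.sum_congr rfl fun τ _ => (key τ).symm
  · have key2 : ∀ (χ : (Fin (k + 1) → V) → ℝ), X.IsForm (k + 1) χ →
        ∀ (τ : Fin k → V), X.IsOSimp τ → ∀ σ0 : Fin 0 → V,
        (X.link (Finset.image τ Finset.univ)).deltaOp
            (linkWt m (Finset.image τ Finset.univ)) (localize χ τ) σ0
          = (-1 : ℝ) ^ k * X.deltaOp m χ τ := by
      intro χ hχ τ hτ σ0
      unfold SComplex.deltaOp SComplex.localize
      rw [Finset.mul_sum]
      refine Finset.sum_congr rfl fun v _ => ?_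
      have hcv : Fin.cons v σ0 = (fun _ : Fin 1 => v) := by
        funext i
        refine Fin.cases ?_ (fun j => j.elim0) i
        exact Fin.cons_zero _ _
      simp only [hcv, Fin.append_right_eq_snoc, link_wt_nil, ← wt_cons m hτ v,
        form_snoc hχ τ v]
      rw [wt_of_osimp m hτ]
      ring
    unfold SComplex.sumOSimp SComplex.innerF
    rw [Finset.mul_sum]
    refine Finset.sum_congr rfl fun τ _ => ?_
    by_cases hτ : X.IsOSimp τ
    · rw [if_pos hτ, fac_cancel hfack]
      beta_reduce
      rw [Fintype.sum_unique,
        key2 φ hφ τ hτ default, key2 ψ hψ τ hτ default, link_wt_nil,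
        Nat.factorial_zero, Nat.cast_one, div_one]
      rw [wt_of_osimp m hτ, mul_mul_mul_comm ((-1 : ℝ) ^ k), ← mul_pow, neg_mul_neg,
        one_mul, one_pow, one_mul]
    · rw [if_neg hτ]
      simp [SComplex.wt, hτ]
end LocalizationHelpers
end

section
/- Let X be a finite pure n-dimensional weighted simplicial complex. For every 0 ≤ k ≤ n−1 and every φ, ψ ∈ C^k(X,ℝ): k! ⟨dφ, dψ⟩ + k!·k ⟨φ, ψ⟩ = Σ_{τ ∈ Σ(k−1)} ⟨d_τ φ_τ, d_τ ψ_τ⟩. In particular, for φ = ψ: k! ‖dφ‖² + k!·k ‖φ‖² = Σ_{τ ∈ Σ(k−1)} ‖d_τ φ_τ‖². -/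
open Finset

variable {V : Type} [Fintype V] [DecidableEq V]

open SComplex

namespace GarlandAux

lemma val_succAbove {n : ℕ} (p : Fin (n+1)) (i : Fin n) :
    ((p.succAbove i : Fin (n+1)) : ℕ) = if (i:ℕ) < (p:ℕ) then (i:ℕ) else (i:ℕ)+1 := by
  rw [Fin.succAbove]
  split_ifs with h1 h2 h2 <;> simp_all [Fin.lt_def]

lemma val_predAbove {n : ℕ} (p : Fin n) (i : Fin (n+1)) :
    ((p.predAbove i : Fin n) : ℕ) = if (p:ℕ) < (i:ℕ) then (i:ℕ) - 1 else (i:ℕ) := by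
  rw [Fin.predAbove]
  have h1 : (p.castSucc < i) ↔ ((p:ℕ) < (i:ℕ)) := by simp [Fin.lt_def]
  split_ifs with ha hb hb
  · exact Fin.coe_pred _ _
  · exact absurd (h1.mp ha) hb
  · exact absurd (h1.mpr hb) ha
  · exact Fin.coe_castPred _ _

lemma succAbove_succAbove_predAbove {n : ℕ} (i : Fin (n+2)) (j : Fin (n+1)) :
    (i.succAbove j).succAbove (j.predAbove i) = i := by
  apply Fin.ext
  simp only [val_succAbove, val_predAbove]
  have hi := i.isLt; have hj := j.isLt
  split_ifs <;> omega

lemma succAbove_succAbove_comm {n : ℕ} (i : Fin (n+2)) (j : Fin (n+1)) (r : Fin n) :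
    (i.succAbove j).succAbove ((j.predAbove i).succAbove r) = i.succAbove (j.succAbove r) := by
  apply Fin.ext
  simp only [val_succAbove, val_predAbove]
  have hi := i.isLt; have hj := j.isLt; have hr := r.isLt
  split_ifs <;> omega

lemma insertNth_eq_cons_comp_cycleRange {V : Type*} {n : ℕ} (p : Fin (n+1)) (v : V) (τ : Fin n → V) :
    Fin.insertNth p v τ = (Fin.cons v τ) ∘ ⇑(Fin.cycleRange p) := by
  funext q
  refine Fin.succAboveCases p ?_ ?_ q
  · simp [Fin.cycleRange_self]
  · intro j
    simp [Fin.cycleRange_succAbove]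

lemma comp_succAbove_insertNth {V : Type*} {n : ℕ} (i : Fin (n+2)) (j : Fin (n+1)) (u : V)
    (ξ : Fin (n+1) → V) :
    (Fin.insertNth i u ξ) ∘ (i.succAbove j).succAbove
      = Fin.insertNth (j.predAbove i) u (ξ ∘ j.succAbove) := by
  funext r
  refine Fin.succAboveCases (j.predAbove i) ?_ ?_ r
  · simp only [Function.comp_apply]
    rw [succAbove_succAbove_predAbove, Fin.insertNth_apply_same, Fin.insertNth_apply_same]
  · intro r'
    simp only [Function.comp_apply]
    rw [succAbove_succAbove_comm, Fin.insertNth_apply_succAbove, Fin.insertNth_apply_succAbove,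
      Function.comp_apply]

lemma sign_aux {n : ℕ} (i : Fin (n+2)) (j : Fin (n+1)) :
    ((i:ℕ) + ((i.succAbove j : Fin (n+2)):ℕ) + ((j.predAbove i : Fin (n+1)):ℕ) + (j:ℕ)) % 2 = 1 := by
  simp only [val_succAbove, val_predAbove]
  have hi := i.isLt; have hj := j.isLt
  split_ifs <;> omega

lemma comp_succAbove_self {V : Type*} {n : ℕ} (i : Fin (n+1)) (v : V) (τ : Fin n → V) :
    (Fin.insertNth i v τ) ∘ i.succAbove = τ := by
  funext r; exact Fin.insertNth_apply_succAbove (α := fun _ => V) i v τ r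

lemma append_one {V : Type*} {n : ℕ} (τ : Fin n → V) (g : Fin 1 → V) :
    Fin.append τ g = Fin.snoc τ (g 0) := by
  funext i
  refine Fin.lastCases ?_ ?_ i
  · rw [Fin.snoc_last, show Fin.last n = Fin.natAdd n (0 : Fin 1) from by apply Fin.ext; simp,
      Fin.append_right]
  · intro i
    rw [Fin.snoc_castSucc, show Fin.castSucc i = Fin.castAdd 1 i from rfl, Fin.append_left]

lemma append_two {V : Type*} {n : ℕ} (τ : Fin n → V) (u v : V) :
    Fin.append τ ![u, v] = Fin.snoc (Fin.snoc τ u) v := by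
  funext i
  refine Fin.lastCases ?_ ?_ i
  · rw [Fin.snoc_last,
      show Fin.last (n+1) = Fin.natAdd n (1 : Fin 2) from by apply Fin.ext; simp,
      Fin.append_right]
    rfl
  · intro i
    rw [Fin.snoc_castSucc]
    refine Fin.lastCases ?_ ?_ i
    · rw [Fin.snoc_last,
        show Fin.castSucc (Fin.last n) = Fin.natAdd n (0 : Fin 2) from by apply Fin.ext; simp,
        Fin.append_right]
      rfl
    · intro i
      rw [Fin.snoc_castSucc, show Fin.castSucc (Fin.castSucc i) = Fin.castAdd 2 i from rfl,
        Fin.append_left]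

end GarlandAux

namespace GarlandAux

open SComplex Finset

variable {V : Type} [Fintype V] [DecidableEq V]

lemma inj_iff_card_image {j : ℕ} (f : Fin j → V) :
    Function.Injective f ↔ (Finset.image f Finset.univ).card = j := by
  constructor
  · intro h
    rw [Finset.card_image_of_injective _ h, Finset.card_univ, Fintype.card_fin]
  · intro h
    have h2 : ((Finset.univ : Finset (Fin j)).image f).card = (Finset.univ : Finset (Fin j)).card := by
      simp [h]
    have := Finset.card_image_iff.mp h2
    rw [Finset.coe_univ] at this
    exact Set.injOn_univ.mp this

lemma wt_congr {j : ℕ} (X : SComplex V) (m : Finset V → ℝ) {ρ ρ' : Fin j → V}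
    (h : Finset.image ρ Finset.univ = Finset.image ρ' Finset.univ) :
    X.wt m ρ = X.wt m ρ' := by
  have key : X.IsOSimp ρ ↔ X.IsOSimp ρ' := by
    unfold SComplex.IsOSimp
    rw [inj_iff_card_image, inj_iff_card_image, h]
  unfold SComplex.wt
  rw [h]
  by_cases hρ : X.IsOSimp ρ'
  · rw [if_pos (key.mpr hρ), if_pos hρ]
  · rw [if_neg (fun hc => hρ (key.mp hc)), if_neg hρ]

lemma image_cons {j : ℕ} (v : V) (τ : Fin j → V) :
    Finset.image (Fin.cons v τ) Finset.univ = insert v (Finset.image τ Finset.univ) := by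
  ext x
  simp only [Finset.mem_image, Finset.mem_univ, true_and, Finset.mem_insert]
  constructor
  · rintro ⟨i, rfl⟩
    refine Fin.cases ?_ ?_ i
    · left; rfl
    · intro i; right; exact ⟨i, by simp⟩
  · rintro (rfl | ⟨i, rfl⟩)
    · exact ⟨0, rfl⟩
    · exact ⟨i.succ, by simp⟩

lemma image_insertNth {j : ℕ} (p : Fin (j+1)) (v : V) (τ : Fin j → V) :
    Finset.image (Fin.insertNth p v τ) Finset.univ = insert v (Finset.image τ Finset.univ) := by
  rw [insertNth_eq_cons_comp_cycleRange,
    ← Finset.image_image (g := Fin.cons v τ) (f := ⇑(Fin.cycleRange p)),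
    Finset.image_univ_equiv (Fin.cycleRange p), image_cons]

lemma image_snoc {j : ℕ} (v : V) (τ : Fin j → V) :
    Finset.image (Fin.snoc τ v) Finset.univ = insert v (Finset.image τ Finset.univ) := by
  rw [← Fin.insertNth_last']
  exact image_insertNth _ _ _

lemma image_append_two {j : ℕ} (τ : Fin j → V) (u v : V) :
    Finset.image (Fin.append τ ![u, v]) Finset.univ
      = insert v (insert u (Finset.image τ Finset.univ)) := by
  rw [append_two, image_snoc, image_snoc]

lemma isOSimp_comp {a b : ℕ} (X : SComplex V) {f : Fin b → V} (h : X.IsOSimp f)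
    {g : Fin a → Fin b} (hg : Function.Injective g) : X.IsOSimp (f ∘ g) := by
  refine ⟨h.1.comp hg, X.down_closed _ h.2 _ ?_⟩
  rw [show (f ∘ g) = f ∘ g from rfl, ← Finset.image_image]
  exact Finset.image_subset_image (Finset.subset_univ _)

lemma sum_insertNth {m : ℕ} (p : Fin (m+1)) (F : (Fin (m+1) → V) → ℝ) :
    ∑ ρ : Fin (m+1) → V, F ρ = ∑ v : V, ∑ τ : Fin m → V, F (Fin.insertNth p v τ) := by
  rw [← Equiv.sum_comp (Fin.insertNthEquiv (fun _ => V) p) F, Fintype.sum_prod_type]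
  rfl

lemma sum_fin_two_arrow (F : (Fin 2 → V) → ℝ) :
    ∑ σ : Fin 2 → V, F σ = ∑ u : V, ∑ v : V, F ![u, v] := by
  rw [← Equiv.sum_comp (finTwoArrowEquiv V).symm F, Fintype.sum_prod_type]
  rfl

lemma form_comp_insertNth {j : ℕ} {X : SComplex V} {φ : (Fin (j+1) → V) → ℝ}
    (hφ : X.IsForm (j+1) φ) (p : Fin (j+1)) (v : V) (τ : Fin j → V) :
    φ (Fin.insertNth p v τ) = (-1 : ℝ)^(p:ℕ) * φ (Fin.cons v τ) := by
  rw [insertNth_eq_cons_comp_cycleRange, hφ.1 (Fin.cons v τ) (Fin.cycleRange p),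
    Fin.sign_cycleRange]
  push_cast
  ring

lemma form_snoc {j : ℕ} {X : SComplex V} {φ : (Fin (j+1) → V) → ℝ}
    (hφ : X.IsForm (j+1) φ) (v : V) (τ : Fin j → V) :
    φ (Fin.snoc τ v) = (-1 : ℝ)^j * φ (Fin.cons v τ) := by
  rw [← Fin.insertNth_last', form_comp_insertNth hφ, Fin.val_last]

lemma sum_wt_cons (X : SComplex V) (n : ℕ) (m : Finset V → ℝ)
    (hm : X.IsBalanced n m) {j : ℕ} (hj : j ≤ n) (σ : Fin j → V) :
    ∑ v : V, X.wt m (Fin.cons v σ) = X.wt m σ := by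
  by_cases hσ : X.IsOSimp σ
  · have hcard : (Finset.image σ Finset.univ).card = j := (inj_iff_card_image σ).mp hσ.1
    have hterm : ∀ v : V, X.wt m (Fin.cons v σ)
        = if v ∉ Finset.image σ Finset.univ ∧
            insert v (Finset.image σ Finset.univ) ∈ X.faces
          then m (insert v (Finset.image σ Finset.univ)) else 0 := by
      intro v
      have hiff : X.IsOSimp (Fin.cons v σ) ↔ (v ∉ Finset.image σ Finset.univ ∧
          insert v (Finset.image σ Finset.univ) ∈ X.faces) := by
        unfold SComplex.IsOSimp
        rw [image_cons]
        constructor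
        · rintro ⟨hi, hf⟩
          refine ⟨?_, hf⟩
          intro hv
          have h2 := (inj_iff_card_image _).mp hi
          rw [image_cons, Finset.insert_eq_self.mpr hv] at h2
          omega
        · rintro ⟨hv, hf⟩
          refine ⟨(inj_iff_card_image _).mpr ?_, hf⟩
          rw [image_cons, Finset.card_insert_of_notMem hv, hcard]
      unfold SComplex.wt
      rw [image_cons, if_congr hiff rfl rfl]
    rw [Finset.sum_congr rfl (fun v _ => hterm v)]
    unfold SComplex.wt
    rw [if_pos hσ, hm.2 _ hσ.2 (by omega), ← Finset.sum_filter]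
    refine Finset.sum_bij (fun v _ => insert v (Finset.image σ Finset.univ)) ?_ ?_ ?_ ?_
    · intro v hv
      rw [Finset.mem_filter] at hv ⊢
      exact ⟨hv.2.2, Finset.subset_insert _ _,
        by rw [Finset.card_insert_of_notMem hv.2.1]⟩
    · intro v hv v' hv' he
      rw [Finset.mem_filter] at hv hv'
      have hmem : v ∈ insert v' (Finset.image σ Finset.univ) :=
        he ▸ Finset.mem_insert_self v _
      rcases Finset.mem_insert.mp hmem with h | h
      · exact h
      · exact absurd h hv.2.1
    · intro t ht
      simp only [Finset.mem_filter] at ht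
      obtain ⟨htf, hst, hcardt⟩ := ht
      have hne : (t \ Finset.image σ Finset.univ).card = 1 := by
        rw [Finset.card_sdiff_of_subset hst]; omega
      obtain ⟨v, hv⟩ := Finset.card_eq_one.mp hne
      have hvt : v ∈ t ∧ v ∉ Finset.image σ Finset.univ := by
        have : v ∈ t \ Finset.image σ Finset.univ := by rw [hv]; exact Finset.mem_singleton_self v
        exact ⟨(Finset.mem_sdiff.mp this).1, (Finset.mem_sdiff.mp this).2⟩
      have heq : insert v (Finset.image σ Finset.univ) = t := by
        refine Finset.eq_of_subset_of_card_le (Finset.insert_subset hvt.1 hst) ?_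
        rw [Finset.card_insert_of_notMem hvt.2]
        omega
      exact ⟨v, Finset.mem_filter.mpr ⟨Finset.mem_univ v, hvt.2, heq ▸ htf⟩, heq⟩
    · intro v hv
      rfl
  · rw [SComplex.wt, if_neg hσ]
    refine Finset.sum_eq_zero fun v _ => ?_
    rw [SComplex.wt, if_neg]
    intro hc
    have : X.IsOSimp ((Fin.cons v σ) ∘ Fin.succ) := isOSimp_comp X hc (Fin.succ_injective _)
    exact hσ (by simpa [Function.comp] using this)


lemma image_pair (u v : V) :
    Finset.image ![u, v] Finset.univ = insert u (insert v (∅ : Finset V)) := by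
  rw [show (![u,v] : Fin 2 → V) = Fin.cons u (Fin.cons v ![]) from rfl, image_cons, image_cons]
  simp

lemma linkwt_eq (X : SComplex V) (m : Finset V → ℝ) {k : ℕ} (τ : Fin k → V)
    (hτ : X.IsOSimp τ) (u v : V) :
    (X.link (Finset.image τ Finset.univ)).wt (linkWt m (Finset.image τ Finset.univ)) ![u, v]
      = X.wt m (Fin.append τ ![u, v]) := by
  set s := Finset.image τ Finset.univ with hs
  have hcard : s.card = k := (inj_iff_card_image τ).mp hτ.1
  have himgT : Finset.image (Fin.append τ ![u,v]) Finset.univ = insert v (insert u s) :=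
    image_append_two τ u v
  have hsets : s ∪ Finset.image ![u,v] Finset.univ
      = Finset.image (Fin.append τ ![u,v]) Finset.univ := by
    rw [image_pair, himgT]
    ext x
    simp only [Finset.mem_union, Finset.mem_insert, Finset.notMem_empty, or_false]
    tauto
  have hiff : (X.link s).IsOSimp ![u,v] ↔ X.IsOSimp (Fin.append τ ![u,v]) := by
    constructor
    · rintro ⟨hinj, hfac⟩
      have hne : u ≠ v := by
        intro h
        exact absurd (hinj (show ![u,v] 0 = ![u,v] 1 by simp [h])) (by decide)
      rw [image_pair] at hfac
      have hne' : insert u (insert v (∅:Finset V)) ≠ ∅ := by simp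
      rw [SComplex.link] at hfac
      simp only [Finset.mem_insert] at hfac
      rcases hfac with hfac | hfac
      · exact absurd hfac hne'
      rw [Finset.mem_filter] at hfac
      obtain ⟨hmem, hdisj, hun⟩ := hfac
      have hus : u ∉ s := fun hu =>
        (Finset.disjoint_left.mp hdisj hu) (Finset.mem_insert_self _ _)
      have hvs : v ∉ s := fun hv =>
        (Finset.disjoint_left.mp hdisj hv)
          (Finset.mem_insert_of_mem (Finset.mem_insert_self _ _))
      constructor
      · apply (inj_iff_card_image _).mpr
        rw [himgT, Finset.card_insert_of_notMem (by
            simp only [Finset.mem_insert]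
            rintro (rfl | h)
            · exact hne rfl
            · exact hvs h),
          Finset.card_insert_of_notMem hus, hcard]
      · rw [himgT, show insert v (insert u s) = s ∪ insert u (insert v ∅) from by
            rw [← himgT, ← hsets, image_pair]]
        exact hun
    · rintro ⟨hinj, hfac⟩
      have hcard2 := (inj_iff_card_image _).mp hinj
      rw [himgT] at hcard2 hfac
      have hvu : v ∉ insert u s := by
        intro hvm
        rw [Finset.insert_eq_self.mpr hvm] at hcard2
        have := Finset.card_insert_le u s
        omega
      have hus : u ∉ s := by
        intro hum
        rw [Finset.insert_eq_self.mpr hum] at hcard2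
        have := Finset.card_insert_le v s
        omega
      have hne : u ≠ v := fun h => hvu (h ▸ Finset.mem_insert_self _ _)
      have hvs : v ∉ s := fun h => hvu (Finset.mem_insert_of_mem h)
      constructor
      · apply (inj_iff_card_image _).mpr
        rw [image_pair, Finset.card_insert_of_notMem (by simp [hne]),
          Finset.card_insert_of_notMem (Finset.notMem_empty v)]
        rfl
      · rw [image_pair, SComplex.link]
        refine Finset.mem_insert.mpr (Or.inr (Finset.mem_filter.mpr ⟨?_, ?_, ?_⟩))
        · refine X.down_closed _ hfac _ ?_
          intro x hx
          simp only [Finset.mem_insert, Finset.notMem_empty, or_false] at hx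
          rcases hx with rfl | rfl
          · exact Finset.mem_insert_of_mem (Finset.mem_insert_self _ _)
          · exact Finset.mem_insert_self _ _
        · simp only [Finset.disjoint_insert_right, Finset.disjoint_empty_right,
            and_true]
          exact ⟨hus, hvs⟩
        · rw [show s ∪ insert u (insert v ∅) = insert v (insert u s) from by
            rw [← image_pair u v, hsets, himgT]]
          exact hfac
  unfold SComplex.wt
  by_cases hvu : (X.link s).IsOSimp ![u,v]
  · rw [if_pos hvu, if_pos (hiff.mp hvu)]
    show m (s ∪ _) = _
    rw [hsets]
  · rw [if_neg hvu, if_neg (fun hc => hvu (hiff.mpr hc))]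


theorem main_aux (X : SComplex V) (n : ℕ) (m : Finset V → ℝ)
    (hm : X.IsBalanced n m)
    (k : ℕ) (hk : k ≤ n - 1)
    (φ ψ : (Fin (k + 1) → V) → ℝ) (hφ : X.IsForm (k + 1) φ) (hψ : X.IsForm (k + 1) ψ) :
    (Nat.factorial k : ℝ) * X.innerF m (k + 2) (dOp φ) (dOp ψ) +
        (Nat.factorial k : ℝ) * (k : ℝ) * X.innerF m (k + 1) φ ψ =
      X.sumOSimp k fun τ =>
        (X.link (Finset.image τ Finset.univ)).innerF
          (linkWt m (Finset.image τ Finset.univ)) 2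
          (dOp (localize φ τ)) (dOp (localize ψ τ)) := by
  set A : ℝ := ∑ τ : Fin (k+1) → V, X.wt m τ * (φ τ * ψ τ) with hA
  set A' : ℝ := ∑ v : V, ∑ τ : Fin (k+1) → V, X.wt m (Fin.cons v τ) * (φ τ * ψ τ) with hA'
  set C : ℝ := ∑ u : V, ∑ v : V, ∑ σ : Fin k → V,
      X.wt m (Fin.cons u (Fin.cons v σ)) * (φ (Fin.cons v σ) * ψ (Fin.cons u σ)) with hC
  have hdsum : ∑ ρ : Fin (k+2) → V, X.wt m ρ * (dOp φ ρ * dOp ψ ρ)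
      = ((k:ℝ)+2) * A' - (((k:ℝ)+2) * ((k:ℝ)+1)) * C := by
    have hT : ∀ i j : Fin (k+2), (∑ ρ : Fin (k+2) → V,
        X.wt m ρ * (((-1:ℝ)^(i:ℕ) * φ (ρ ∘ i.succAbove)) *
          ((-1:ℝ)^(j:ℕ) * ψ (ρ ∘ j.succAbove))))
        = if i = j then A' else -C := by
      intro i j
      by_cases hij : i = j
      · subst hij
        rw [if_pos rfl, sum_insertNth i, hA']
        refine Finset.sum_congr rfl fun v _ => Finset.sum_congr rfl fun τ _ => ?_
        rw [comp_succAbove_self,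
          wt_congr X m (ρ := Fin.insertNth i v τ) (ρ' := Fin.cons v τ)
            (by rw [image_insertNth, image_cons])]
        have hsq : ((-1:ℝ)^(i:ℕ)) * ((-1:ℝ)^(i:ℕ)) = 1 := by
          rw [← pow_add]
          exact Even.neg_one_pow ⟨(i:ℕ), rfl⟩
        linear_combination (X.wt m (Fin.cons v τ) * (φ τ * ψ τ)) * hsq
      · rw [if_neg hij]
        obtain ⟨j', hj'⟩ := Fin.exists_succAbove_eq (Ne.symm hij)
        subst hj'
        rw [sum_insertNth i, hC, ← Finset.sum_neg_distrib]
        refine Finset.sum_congr rfl fun u _ => ?_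
        rw [sum_insertNth j', ← Finset.sum_neg_distrib]
        refine Finset.sum_congr rfl fun v _ => ?_
        rw [← Finset.sum_neg_distrib]
        refine Finset.sum_congr rfl fun σ _ => ?_
        rw [comp_succAbove_self, comp_succAbove_insertNth, comp_succAbove_self,
          form_comp_insertNth hφ, form_comp_insertNth hψ,
          wt_congr X m (ρ := Fin.insertNth i u (Fin.insertNth j' v σ))
            (ρ' := Fin.cons u (Fin.cons v σ))
            (by rw [image_insertNth, image_insertNth, image_cons, image_cons])]
        have hsign : ((-1:ℝ))^((i:ℕ) + ((i.succAbove j' : Fin (k+2)):ℕ)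
            + ((j'.predAbove i : Fin (k+1)):ℕ) + (j':ℕ)) = -1 :=
          Odd.neg_one_pow (Nat.odd_iff.mpr (sign_aux i j'))
        linear_combination (X.wt m (Fin.cons u (Fin.cons v σ)) *
          (φ (Fin.cons v σ) * ψ (Fin.cons u σ))) * hsign
    have expand : ∑ ρ : Fin (k+2) → V, X.wt m ρ * (dOp φ ρ * dOp ψ ρ)
        = ∑ i : Fin (k+2), ∑ j : Fin (k+2), ∑ ρ : Fin (k+2) → V,
            X.wt m ρ * (((-1:ℝ)^(i:ℕ) * φ (ρ ∘ i.succAbove)) *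
              ((-1:ℝ)^(j:ℕ) * ψ (ρ ∘ j.succAbove))) := by
      have h1 : ∀ ρ : Fin (k+2) → V, X.wt m ρ * (dOp φ ρ * dOp ψ ρ)
          = ∑ i : Fin (k+2), ∑ j : Fin (k+2),
              X.wt m ρ * (((-1:ℝ)^(i:ℕ) * φ (ρ ∘ i.succAbove)) *
                ((-1:ℝ)^(j:ℕ) * ψ (ρ ∘ j.succAbove))) := by
        intro ρ
        show X.wt m ρ * ((∑ i : Fin (k+2), (-1:ℝ)^(i:ℕ) * φ (ρ ∘ i.succAbove)) *
          (∑ j : Fin (k+2), (-1:ℝ)^(j:ℕ) * ψ (ρ ∘ j.succAbove))) = _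
        rw [Finset.sum_mul_sum, Finset.mul_sum]
        exact Finset.sum_congr rfl fun i _ => by rw [Finset.mul_sum]
      rw [Finset.sum_congr rfl fun ρ _ => h1 ρ, Finset.sum_comm]
      exact Finset.sum_congr rfl fun i _ => Finset.sum_comm
    have hrow : ∀ i : Fin (k+2), (∑ j : Fin (k+2), if i = j then A' else -C)
        = (A' + C) + ((k:ℝ)+2) * (-C) := by
      intro i
      have hsplit : ∀ j : Fin (k+2), (if i = j then A' else -C)
          = (if i = j then A' + C else 0) + (-C) := by
        intro j
        split_ifs <;> ring
      rw [Finset.sum_congr rfl fun j _ => hsplit j, Finset.sum_add_distrib,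
        Finset.sum_const, Finset.sum_ite_eq, if_pos (Finset.mem_univ i),
        Finset.card_univ, Fintype.card_fin, nsmul_eq_mul]
      push_cast
      ring
    rw [expand, Finset.sum_congr rfl fun i _ => Finset.sum_congr rfl fun j _ => hT i j,
      Finset.sum_congr rfl fun i _ => hrow i, Finset.sum_const,
      Finset.card_univ, Fintype.card_fin, nsmul_eq_mul]
    push_cast
    ring
  have hbal : (k:ℝ) * A' = (k:ℝ) * A := by
    by_cases hk0 : k = 0
    · rw [hk0]
      norm_num
    · have hkn : k + 1 ≤ n := by omega
      have hAA : A' = A := by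
        rw [hA', hA, Finset.sum_comm]
        refine Finset.sum_congr rfl fun τ _ => ?_
        rw [← Finset.sum_mul, sum_wt_cons X n m hm hkn τ]
      rw [hAA]
  have hRHS : (X.sumOSimp k fun τ =>
      (X.link (Finset.image τ Finset.univ)).innerF
        (linkWt m (Finset.image τ Finset.univ)) 2
        (dOp (localize φ τ)) (dOp (localize ψ τ))) = A' - C := by
    have hF : ∀ τ : Fin k → V,
        (if X.IsOSimp τ then
          (X.link (Finset.image τ Finset.univ)).innerF
            (linkWt m (Finset.image τ Finset.univ)) 2
            (dOp (localize φ τ)) (dOp (localize ψ τ)) else 0)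
        = ∑ u : V, ∑ v : V, X.wt m (Fin.append τ ![u,v]) / 2 *
            ((φ (Fin.snoc τ v) - φ (Fin.snoc τ u)) * (ψ (Fin.snoc τ v) - ψ (Fin.snoc τ u))) := by
      intro τ
      have hd : ∀ (χ : (Fin (k+1) → V) → ℝ) (u v : V),
          dOp (localize χ τ) ![u,v] = χ (Fin.snoc τ v) - χ (Fin.snoc τ u) := by
        intro χ u v
        show (∑ i : Fin 2, (-1:ℝ)^(i:ℕ) * localize χ τ (![u,v] ∘ i.succAbove)) = _
        rw [Fin.sum_univ_two]
        have e0 : localize χ τ (![u,v] ∘ (0 : Fin 2).succAbove) = χ (Fin.snoc τ v) := by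
          show χ (Fin.append τ (![u,v] ∘ (0 : Fin 2).succAbove)) = _
          rw [append_one]
          rfl
        have e1 : localize χ τ (![u,v] ∘ (1 : Fin 2).succAbove) = χ (Fin.snoc τ u) := by
          show χ (Fin.append τ (![u,v] ∘ (1 : Fin 2).succAbove)) = _
          rw [append_one]
          rfl
        rw [e0, e1]
        norm_num
        ring
      by_cases hτ : X.IsOSimp τ
      · rw [if_pos hτ, SComplex.innerF, sum_fin_two_arrow
          (fun σ => (X.link (Finset.image τ Finset.univ)).wt
            (linkWt m (Finset.image τ Finset.univ)) σ / (Nat.factorial 2 : ℝ) *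
            (dOp (localize φ τ) σ * dOp (localize ψ τ) σ))]
        refine Finset.sum_congr rfl fun u _ => Finset.sum_congr rfl fun v _ => ?_
        rw [hd φ, hd ψ, linkwt_eq X m τ hτ u v]
        norm_num [Nat.factorial]
      · rw [if_neg hτ]
        symm
        refine Finset.sum_eq_zero fun u _ => Finset.sum_eq_zero fun v _ => ?_
        have hz : X.wt m (Fin.append τ ![u,v]) = 0 := by
          rw [SComplex.wt, if_neg]
          intro hc
          have he : (Fin.append τ ![u,v]) ∘ (Fin.castAdd 2) = τ :=
            funext fun r => Fin.append_left _ _ r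
          exact hτ (he ▸ isOSimp_comp X hc (Fin.castAdd_injective k 2))
        rw [hz]
        ring
    rw [SComplex.sumOSimp, Finset.sum_congr rfl fun τ _ => hF τ]
    have hPsym : ∀ (τ : Fin k → V) (u v : V),
        X.wt m (Fin.append τ ![u,v]) = X.wt m (Fin.append τ ![v,u]) := by
      intro τ u v
      apply wt_congr
      rw [image_append_two, image_append_two, Finset.insert_comm]
    have hexp : ∀ τ : Fin k → V,
        (∑ u : V, ∑ v : V, X.wt m (Fin.append τ ![u,v]) / 2 *
          ((φ (Fin.snoc τ v) - φ (Fin.snoc τ u)) * (ψ (Fin.snoc τ v) - ψ (Fin.snoc τ u))))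
        = (∑ u : V, ∑ v : V,
            X.wt m (Fin.append τ ![u,v]) * (φ (Fin.snoc τ v) * ψ (Fin.snoc τ v)))
          - (∑ u : V, ∑ v : V,
            X.wt m (Fin.append τ ![u,v]) * (φ (Fin.snoc τ v) * ψ (Fin.snoc τ u))) := by
      intro τ
      have h1 : ∀ u v : V, X.wt m (Fin.append τ ![u,v]) / 2 *
          ((φ (Fin.snoc τ v) - φ (Fin.snoc τ u)) * (ψ (Fin.snoc τ v) - ψ (Fin.snoc τ u)))
          = (X.wt m (Fin.append τ ![u,v]) * (φ (Fin.snoc τ v) * ψ (Fin.snoc τ v)) / 2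
              + X.wt m (Fin.append τ ![u,v]) * (φ (Fin.snoc τ u) * ψ (Fin.snoc τ u)) / 2)
            - (X.wt m (Fin.append τ ![u,v]) * (φ (Fin.snoc τ v) * ψ (Fin.snoc τ u)) / 2
              + X.wt m (Fin.append τ ![u,v]) * (φ (Fin.snoc τ u) * ψ (Fin.snoc τ v)) / 2) := by
        intro u v
        ring
      rw [Finset.sum_congr rfl fun u _ => Finset.sum_congr rfl fun v _ => h1 u v]
      simp only [Finset.sum_sub_distrib, Finset.sum_add_distrib]
      have hsw1 : (∑ u : V, ∑ v : V,
            X.wt m (Fin.append τ ![u,v]) * (φ (Fin.snoc τ u) * ψ (Fin.snoc τ u)) / 2)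
          = ∑ u : V, ∑ v : V,
            X.wt m (Fin.append τ ![u,v]) * (φ (Fin.snoc τ v) * ψ (Fin.snoc τ v)) / 2 := by
        rw [Finset.sum_comm]
        exact Finset.sum_congr rfl fun u _ => Finset.sum_congr rfl fun v _ => by
          rw [hPsym τ v u]
      have hsw2 : (∑ u : V, ∑ v : V,
            X.wt m (Fin.append τ ![u,v]) * (φ (Fin.snoc τ u) * ψ (Fin.snoc τ v)) / 2)
          = ∑ u : V, ∑ v : V,
            X.wt m (Fin.append τ ![u,v]) * (φ (Fin.snoc τ v) * ψ (Fin.snoc τ u)) / 2 := by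
        rw [Finset.sum_comm]
        exact Finset.sum_congr rfl fun u _ => Finset.sum_congr rfl fun v _ => by
          rw [hPsym τ v u]
      rw [hsw1, hsw2]
      have hhalf1 : (∑ u : V, ∑ v : V,
            X.wt m (Fin.append τ ![u,v]) * (φ (Fin.snoc τ v) * ψ (Fin.snoc τ v)) / 2)
          + (∑ u : V, ∑ v : V,
            X.wt m (Fin.append τ ![u,v]) * (φ (Fin.snoc τ v) * ψ (Fin.snoc τ v)) / 2)
          = ∑ u : V, ∑ v : V,
            X.wt m (Fin.append τ ![u,v]) * (φ (Fin.snoc τ v) * ψ (Fin.snoc τ v)) := by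
        rw [← Finset.sum_add_distrib]
        refine Finset.sum_congr rfl fun u _ => ?_
        rw [← Finset.sum_add_distrib]
        exact Finset.sum_congr rfl fun v _ => by ring
      have hhalf2 : (∑ u : V, ∑ v : V,
            X.wt m (Fin.append τ ![u,v]) * (φ (Fin.snoc τ v) * ψ (Fin.snoc τ u)) / 2)
          + (∑ u : V, ∑ v : V,
            X.wt m (Fin.append τ ![u,v]) * (φ (Fin.snoc τ v) * ψ (Fin.snoc τ u)) / 2)
          = ∑ u : V, ∑ v : V,
            X.wt m (Fin.append τ ![u,v]) * (φ (Fin.snoc τ v) * ψ (Fin.snoc τ u)) := by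
        rw [← Finset.sum_add_distrib]
        refine Finset.sum_congr rfl fun u _ => ?_
        rw [← Finset.sum_add_distrib]
        exact Finset.sum_congr rfl fun v _ => by ring
      linear_combination hhalf1 - hhalf2
    rw [Finset.sum_congr rfl fun τ _ => hexp τ, Finset.sum_sub_distrib]
    have hT1 : (∑ τ : Fin k → V, ∑ u : V, ∑ v : V,
        X.wt m (Fin.append τ ![u,v]) * (φ (Fin.snoc τ v) * ψ (Fin.snoc τ v))) = A' := by
      rw [hA']
      have hsnoc : ∀ w : V, (∑ τ' : Fin (k+1) → V, X.wt m (Fin.cons w τ') * (φ τ' * ψ τ'))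
          = ∑ v : V, ∑ τ : Fin k → V,
            X.wt m (Fin.cons w (Fin.snoc τ v)) * (φ (Fin.snoc τ v) * ψ (Fin.snoc τ v)) := by
        intro w
        rw [sum_insertNth (Fin.last k) (fun τ' => X.wt m (Fin.cons w τ') * (φ τ' * ψ τ'))]
        simp only [Fin.insertNth_last']
      rw [Finset.sum_congr rfl fun w _ => hsnoc w, Finset.sum_comm]
      refine Finset.sum_congr rfl fun u _ => ?_
      rw [Finset.sum_comm]
      refine Finset.sum_congr rfl fun v _ => Finset.sum_congr rfl fun τ _ => ?_
      rw [wt_congr X m (ρ := Fin.append τ ![u,v]) (ρ' := Fin.cons u (Fin.snoc τ v)) (by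
        rw [image_append_two, image_cons, image_snoc, Finset.insert_comm])]
    have hT3 : (∑ τ : Fin k → V, ∑ u : V, ∑ v : V,
        X.wt m (Fin.append τ ![u,v]) * (φ (Fin.snoc τ v) * ψ (Fin.snoc τ u))) = C := by
      rw [hC, Finset.sum_comm]
      refine Finset.sum_congr rfl fun u _ => ?_
      rw [Finset.sum_comm]
      refine Finset.sum_congr rfl fun v _ => Finset.sum_congr rfl fun σ _ => ?_
      rw [wt_congr X m (ρ := Fin.append σ ![u,v]) (ρ' := Fin.cons u (Fin.cons v σ)) (by
        rw [image_append_two, image_cons, image_cons, Finset.insert_comm]),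
        form_snoc hφ, form_snoc hψ]
      have hsq : ((-1:ℝ)^k) * ((-1:ℝ)^k) = 1 := by
        rw [← pow_add]
        exact Even.neg_one_pow ⟨k, rfl⟩
      linear_combination (X.wt m (Fin.cons u (Fin.cons v σ)) *
        (φ (Fin.cons v σ) * ψ (Fin.cons u σ))) * hsq
    rw [hT1, hT3]
  have hinnerF : ∀ (j : ℕ) (f g : (Fin j → V) → ℝ), X.innerF m j f g
      = (∑ σ : Fin j → V, X.wt m σ * (f σ * g σ)) / (Nat.factorial j : ℝ) := by
    intro j f g
    rw [SComplex.innerF, Finset.sum_div]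
    exact Finset.sum_congr rfl fun σ _ => by ring
  rw [hRHS, hinnerF, hinnerF, hdsum, ← hA]
  have hf2 : (Nat.factorial (k+2) : ℝ) = ((k:ℝ)+2)*((k:ℝ)+1)*(Nat.factorial k : ℝ) := by
    rw [show k+2 = (k+1)+1 from rfl, Nat.factorial_succ, Nat.factorial_succ]
    push_cast
    ring
  have hf1 : (Nat.factorial (k+1) : ℝ) = ((k:ℝ)+1)*(Nat.factorial k : ℝ) := by
    rw [Nat.factorial_succ]
    push_cast
    ring
  have hk0 : (Nat.factorial k : ℝ) ≠ 0 := Nat.cast_ne_zero.mpr (Nat.factorial_ne_zero k)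
  have hk1 : ((k:ℝ)+1) ≠ 0 := by positivity
  have hk2 : ((k:ℝ)+2) ≠ 0 := by positivity
  rw [hf2, hf1]
  have e1 : (Nat.factorial k:ℝ) * ((((k:ℝ)+2) * A' - (((k:ℝ)+2)*((k:ℝ)+1))*C)
      / (((k:ℝ)+2)*((k:ℝ)+1)*(Nat.factorial k:ℝ))) = A'/((k:ℝ)+1) - C := by
    field_simp
  have e2 : (Nat.factorial k:ℝ) * (k:ℝ) * (A/(((k:ℝ)+1)*(Nat.factorial k:ℝ)))
      = ((k:ℝ)*A)/((k:ℝ)+1) := by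
    field_simp
  rw [e1, e2, ← hbal]
  field_simp
  ring


end GarlandAux

/-- Corollary 3.5: `k!⟨dφ,dψ⟩ + k!·k⟨φ,ψ⟩ = ∑_{τ∈Σ(k-1)} ⟨d_τφ_τ,d_τψ_τ⟩`,
and in particular `k!‖dφ‖² + k!·k‖φ‖² = ∑_{τ∈Σ(k-1)} ‖d_τφ_τ‖²`. -/
theorem localization_norm_identity
    (X : SComplex V) (n : ℕ) (m : Finset V → ℝ)
    (hpure : X.Pure n) (hm : X.IsBalanced n m)
    (k : ℕ) (hk : k ≤ n - 1)
    (φ ψ : (Fin (k + 1) → V) → ℝ) (hφ : X.IsForm (k + 1) φ) (hψ : X.IsForm (k + 1) ψ) :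
    ((Nat.factorial k : ℝ) * X.innerF m (k + 2) (dOp φ) (dOp ψ) +
        (Nat.factorial k : ℝ) * (k : ℝ) * X.innerF m (k + 1) φ ψ =
      X.sumOSimp k fun τ =>
        (X.link (Finset.image τ Finset.univ)).innerF
          (linkWt m (Finset.image τ Finset.univ)) 2
          (dOp (localize φ τ)) (dOp (localize ψ τ))) ∧
    (Nat.factorial k : ℝ) * X.innerF m (k + 2) (dOp φ) (dOp φ) +
        (Nat.factorial k : ℝ) * (k : ℝ) * X.innerF m (k + 1) φ φ =
      X.sumOSimp k fun τ =>
        (X.link (Finset.image τ Finset.univ)).innerF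
          (linkWt m (Finset.image τ Finset.univ)) 2
          (dOp (localize φ τ)) (dOp (localize φ τ)) := by
  exact ⟨GarlandAux.main_aux X n m hm k hk φ ψ hφ hψ,
    GarlandAux.main_aux X n m hm k hk φ φ hφ hφ⟩
end
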